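/- Let (K_n) be the Markov chain on ℝ³ \ {0} with K_{n+1} = a·K_n + (1-a)|K_n|·U_n, where (U_n) are i.i.d. uniform on S² and a ∈ (0,1). Then the increments D_{n+1} = log|K_{n+1}| - log|K_n| are i.i.d., each distributed as log|a·y + (1-a)·U| for any fixed y ∈ S² with U uniform on S². -/

import Mathlib

noncomputable section
open MeasureTheory ProbabilityTheory
open scoped ENNReal

local notation "E3" => EuclideanSpace ℝ (Fin 3)

/-- deterministic evolution map -/
def incKappa (a : ℝ) (k : E3) : ℕ → (ℕ → E3) → E3
  | 0, _ => k
  | (n+1), v => a • incKappa a k n v + ((1 - a) * ‖incKappa a k n v‖) • v n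

lemma incKappa_measurable (a : ℝ) (k : E3) (n : ℕ) : Measurable (incKappa a k n) := by
  induction n with
  | zero => exact measurable_const
  | succ n ih =>
    exact (measurable_const.fun_smul ih).fun_add
      ((measurable_const.fun_mul ih.norm).fun_smul (measurable_pi_apply n))

lemma incKappa_congr (a : ℝ) (k : E3) (n : ℕ) {v w : ℕ → E3}
    (h : ∀ i < n, v i = w i) : incKappa a k n v = incKappa a k n w := by
  induction n with
  | zero => rfl
  | succ n ih =>
    have h' : ∀ i < n, v i = w i := fun i hi => h i (Nat.lt_succ_of_lt hi)
    simp only [incKappa, ih h', h n (Nat.lt_succ_self n)]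

/-- the increment function -/
def incG (a : ℝ) (x z : E3) : ℝ :=
  Real.log ‖a • x + ((1 - a) * ‖x‖) • z‖ - Real.log ‖x‖

lemma incG_measurable (a : ℝ) : Measurable (fun p : E3 × E3 => incG a p.1 p.2) := by
  apply Measurable.sub
  · exact (((measurable_const.fun_smul measurable_fst).fun_add
      ((measurable_const.fun_mul measurable_fst.norm).fun_smul measurable_snd)).norm).log
  · exact measurable_fst.norm.log

lemma incG_measurable_right (a : ℝ) (x : E3) : Measurable (incG a x) := by
  unfold incG
  exact ((measurable_const.add (measurable_id.const_smul ((1 - a) * ‖x‖))).norm.log).sub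
    measurable_const

lemma map_rot_sphere (R : E3 ≃ₗᵢ[ℝ] E3) :
    Measure.map R ((μH[2] : Measure E3).restrict (Metric.sphere (0:E3) 1)) =
      (μH[2] : Measure E3).restrict (Metric.sphere (0:E3) 1) := by
  have hRS : (⇑R) ⁻¹' (Metric.sphere (0:E3) 1) = Metric.sphere (0:E3) 1 := by
    ext x
    simp [Metric.mem_sphere, dist_eq_norm, R.norm_map]
  ext s hs
  rw [Measure.map_apply R.continuous.measurable hs, Measure.restrict_apply hs,
    Measure.restrict_apply (hs.preimage R.continuous.measurable)]
  have : (⇑R) ⁻¹' s ∩ Metric.sphere (0:E3) 1 = (⇑R) ⁻¹' (s ∩ Metric.sphere (0:E3) 1) := by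
    rw [Set.preimage_inter, hRS]
  rw [this, R.isometry.hausdorffMeasure_preimage (Or.inr R.surjective),
    Set.range_eq_univ.mpr R.surjective, Set.inter_univ]

lemma map_rot (a : ℝ) (u : Measure E3)
    (hu : u = ENNReal.ofReal (4 * Real.pi)⁻¹ •
      (μH[2] : Measure E3).restrict (Metric.sphere (0:E3) 1))
    (w y : E3) (hw : ‖w‖ = 1) (hy : ‖y‖ = 1) :
    Measure.map (fun z => Real.log ‖a • w + (1 - a) • z‖) u =
      Measure.map (fun z => Real.log ‖a • y + (1 - a) • z‖) u := by
  set R := Submodule.reflection (ℝ ∙ (y - w))ᗮ with hRdef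
  have hR : R y = w := Submodule.reflection_sub (by rw [hy, hw])
  have hmapR : Measure.map (⇑R) u = u := by
    rw [hu, Measure.map_smul, map_rot_sphere]
  have hmeas : Measurable (fun z : E3 => Real.log ‖a • w + (1 - a) • z‖) :=
    ((measurable_const.add (measurable_id.const_smul (1 - a))).norm).log
  conv_lhs => rw [← hmapR]
  rw [Measure.map_map hmeas R.continuous.measurable]
  congr 1
  funext z
  show Real.log ‖a • w + (1 - a) • R z‖ = Real.log ‖a • y + (1 - a) • z‖
  rw [← hR, ← R.map_smul, ← R.map_smul, ← R.map_add, R.norm_map]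

lemma incG_law (a : ℝ) (ha : a ∈ Set.Ioo (0:ℝ) 1) (u : Measure E3)
    (hu : u = ENNReal.ofReal (4 * Real.pi)⁻¹ •
      (μH[2] : Measure E3).restrict (Metric.sphere (0:E3) 1))
    (hatoms : ∀ p : E3, u {p} = 0)
    (x : E3) (hx : x ≠ 0) (y : E3) (hy : ‖y‖ = 1) :
    Measure.map (incG a x) u =
      Measure.map (fun z => Real.log ‖a • y + (1 - a) • z‖) u := by
  have hxn : ‖x‖ ≠ 0 := norm_ne_zero_iff.2 hx
  have h1a : (1:ℝ) - a ≠ 0 := by have := ha.2; intro h; linarith [sub_eq_zero.mp h]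
  set w : E3 := ‖x‖⁻¹ • x with hwdef
  have hw : ‖w‖ = 1 := by
    rw [hwdef, norm_smul, Real.norm_eq_abs, abs_inv, abs_norm, inv_mul_cancel₀ hxn]
  have hnull : u {z : E3 | a • w + (1 - a) • z = 0} = 0 := by
    have hsub : {z : E3 | a • w + (1 - a) • z = 0} ⊆ {((1 - a)⁻¹ * (-a)) • w} := by
      intro z hz
      simp only [Set.mem_setOf_eq] at hz
      have : (1 - a) • z = (-a) • w := by
        rw [neg_smul]
        linear_combination (norm := module) hz
      have : z = ((1 - a)⁻¹ * (-a)) • w := by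
        rw [mul_smul, ← this, smul_smul, inv_mul_cancel₀ h1a, one_smul]
      simpa using this
    exact le_antisymm (le_trans (measure_mono hsub) (le_of_eq (hatoms _))) (zero_le)
  have hae : ∀ᵐ z ∂u, a • w + (1 - a) • z ≠ 0 := by
    rw [ae_iff]
    convert hnull using 2
    simp
  have step1 : incG a x =ᵐ[u] fun z => Real.log ‖a • w + (1 - a) • z‖ := by
    filter_upwards [hae] with z hz
    have key : a • x + ((1 - a) * ‖x‖) • z = ‖x‖ • (a • w + (1 - a) • z) := by
      rw [hwdef]
      match_scalars
      · field_simp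
      · ring
    rw [incG, key, norm_smul, Real.norm_eq_abs, abs_of_nonneg (norm_nonneg x),
      Real.log_mul hxn (norm_ne_zero_iff.2 hz)]
    ring
  rw [Measure.map_congr step1, map_rot a u hu w y hw hy]

def incExt (n : ℕ) (v : Fin n → E3) : ℕ → E3 := fun i => if h : i < n then v ⟨i, h⟩ else 0

lemma incExt_measurable (n : ℕ) : Measurable (incExt n) := by
  apply measurable_pi_lambda
  intro i
  by_cases h : i < n
  · simpa [incExt, h] using measurable_pi_apply (⟨i, h⟩ : Fin n)
  · simp only [incExt, h, dif_neg, not_false_iff]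
    exact measurable_const

set_option maxHeartbeats 2000000 in
theorem increments_iid
    (a : ℝ) (ha : a ∈ Set.Ioo (0 : ℝ) 1)
    (u : Measure (EuclideanSpace ℝ (Fin 3)))
    (hu : u = ENNReal.ofReal (4 * Real.pi)⁻¹ •
      (μH[2] : Measure (EuclideanSpace ℝ (Fin 3))).restrict
        (Metric.sphere (0 : EuclideanSpace ℝ (Fin 3)) 1))
    (Ω : Type*) [MeasurableSpace Ω] (P : Measure Ω) [IsProbabilityMeasure P]
    (U : ℕ → Ω → EuclideanSpace ℝ (Fin 3))
    (hUmeas : ∀ n, Measurable (U n))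
    (hUindep : iIndepFun U P)
    (hUlaw : ∀ n, Measure.map (U n) P = u)
    (k : EuclideanSpace ℝ (Fin 3)) (hk : k ≠ 0)
    (K : ℕ → Ω → EuclideanSpace ℝ (Fin 3))
    (hK0 : ∀ ω, K 0 ω = k)
    (hKrec : ∀ n ω, K (n + 1) ω = a • K n ω + ((1 - a) * ‖K n ω‖) • U n ω)
    (D : ℕ → Ω → ℝ)
    (hD : ∀ n ω, D n ω = Real.log ‖K (n + 1) ω‖ - Real.log ‖K n ω‖) :
    iIndepFun D P ∧
      ∀ (n : ℕ) (y : EuclideanSpace ℝ (Fin 3)), ‖y‖ = 1 →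
        Measure.map (D n) P =
          Measure.map (fun z => Real.log ‖a • y + (1 - a) • z‖) u := by
  obtain ⟨ha0, ha1⟩ := ha
  have h1a : (1 : ℝ) - a ≠ 0 := by intro h; linarith [sub_eq_zero.mp h]
  -- basic facts about u
  have hatoms : ∀ p : E3, u ({p} : Set E3) = 0 := by
    intro p
    haveI : NullSingletonClass (μH[2] : Measure E3) := Measure.noAtoms_hausdorff E3 (by norm_num)
    have h0 : (μH[2] : Measure E3) ({p} ∩ Metric.sphere (0:E3) 1) = 0 :=
      le_antisymm (le_trans (measure_mono Set.inter_subset_left)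
        (le_of_eq (measure_singleton p))) (zero_le)
    rw [hu, Measure.smul_apply, Measure.restrict_apply (measurableSet_singleton p), h0,
      smul_zero]
  -- reference unit vector and law
  set e₀ : E3 := EuclideanSpace.single 0 1 with he₀
  have he₀n : ‖e₀‖ = 1 := by rw [he₀, EuclideanSpace.norm_single]; norm_num
  set ν := Measure.map (fun z => Real.log ‖a • e₀ + (1 - a) • z‖) u with hν
  -- measurability
  have hKmeas : ∀ n, Measurable (K n) := by
    intro n
    induction n with
    | zero =>
      have : K 0 = fun _ => k := funext hK0
      rw [this]; exact measurable_const
    | succ n ih =>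
      have : K (n + 1) = fun ω => a • K n ω + ((1 - a) * ‖K n ω‖) • U n ω := funext (hKrec n)
      rw [this]
      exact (measurable_const.fun_smul ih).fun_add ((measurable_const.fun_mul ih.norm).fun_smul (hUmeas n))
  have hDmeas : ∀ n, Measurable (D n) := by
    intro n
    have : D n = fun ω => Real.log ‖K (n + 1) ω‖ - Real.log ‖K n ω‖ := funext (hD n)
    rw [this]
    exact ((hKmeas (n + 1)).norm.log).sub ((hKmeas n).norm.log)
  have hDg : ∀ n ω, D n ω = incG a (K n ω) (U n ω) := by
    intro n ω
    rw [hD n ω, incG, ← hKrec n ω]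
  -- K as function of the U's
  have hKv : ∀ n ω, K n ω = incKappa a k n (fun i => U i ω) := by
    intro n
    induction n with
    | zero => intro ω; rw [hK0 ω]; rfl
    | succ n ih => intro ω; rw [hKrec n ω, ih ω]; rfl
  have hKV : ∀ (n i : ℕ), i ≤ n → ∀ ω,
      K i ω = incKappa a k i (incExt n (fun j : Fin n => U (j : ℕ) ω)) := by
    intro n i hi ω
    rw [hKv i ω]
    apply incKappa_congr
    intro j hj
    have hjn : j < n := lt_of_lt_of_le hj hi
    simp [incExt, hjn]
  have hVmeas : ∀ n, Measurable (fun ω (i : Fin n) => U (i : ℕ) ω) := by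
    intro n
    exact measurable_pi_lambda _ fun i => hUmeas i
  -- independence of the first n U's from U n
  have hindep : ∀ n, IndepFun (fun ω (i : Fin n) => U (i : ℕ) ω) (U n) P := by
    intro n
    have h1 := hUindep.indepFun_finset (Finset.range n) {n} (by simp) hUmeas
    have hφ : Measurable (fun (v : {x // x ∈ Finset.range n} → E3) (i : Fin n) =>
        v ⟨(i : ℕ), Finset.mem_range.mpr i.2⟩) :=
      measurable_pi_lambda _ fun i => measurable_pi_apply _
    have hψ : Measurable (fun (v : {x // x ∈ ({n} : Finset ℕ)} → E3) =>
        v ⟨n, Finset.mem_singleton_self n⟩) := measurable_pi_apply _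
    exact h1.comp hφ hψ
  -- joint law of (first n U's, U n)
  have hpairlaw : ∀ n, Measure.map (fun ω => ((fun i : Fin n => U (i : ℕ) ω), U n ω)) P =
      (Measure.map (fun ω (i : Fin n) => U (i : ℕ) ω) P).prod u := by
    intro n
    rw [← hUlaw n]
    exact (indepFun_iff_map_prod_eq_prod_map_map (hVmeas n).aemeasurable
      (hUmeas n).aemeasurable).1 (hindep n)
  have hPAIR : ∀ (n : ℕ) (C : Set ((Fin n → E3) × E3)), MeasurableSet C →
      P ((fun ω => ((fun i : Fin n => U (i : ℕ) ω), U n ω)) ⁻¹' C) =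
        ∫⁻ v, u {z | (v, z) ∈ C} ∂(Measure.map (fun ω (i : Fin n) => U (i : ℕ) ω) P) := by
    intro n C hC
    haveI : IsProbabilityMeasure (Measure.map (fun ω (i : Fin n) => U (i : ℕ) ω) P) :=
      Measure.isProbabilityMeasure_map (hVmeas n).aemeasurable
    haveI : IsProbabilityMeasure u := by
      rw [← hUlaw 0]; exact Measure.isProbabilityMeasure_map (hUmeas 0).aemeasurable
    rw [← Measure.map_apply ((hVmeas n).prodMk (hUmeas n)) hC, hpairlaw n,
      Measure.prod_apply hC]
    rfl
  -- a.s. the chain never hits 0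
  have hKzero : ∀ n, P {ω | K n ω = 0} = 0 := by
    intro n
    induction n with
    | zero =>
      have : {ω | K 0 ω = 0} = ∅ := by
        ext ω; simp [hK0 ω, hk]
      rw [this, measure_empty]
    | succ n ih =>
      set κ : (Fin n → E3) → E3 := fun v => incKappa a k n (incExt n v) with hκ
      have hκm : Measurable κ := (incKappa_measurable a k n).comp (incExt_measurable n)
      set hfun : E3 → E3 := fun x => (((1 - a) * ‖x‖)⁻¹ * (-a)) • x with hhfun
      have hfm : Measurable hfun :=
        (((measurable_const.mul measurable_norm).inv).mul measurable_const).smul measurable_id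
      set C : Set ((Fin n → E3) × E3) := {p | p.2 = hfun (κ p.1)} with hC
      have hCm : MeasurableSet C :=
        measurableSet_eq_fun measurable_snd (hfm.comp (hκm.comp measurable_fst))
      have hsub : {ω | K (n + 1) ω = 0} ⊆ {ω | K n ω = 0} ∪
          ((fun ω => ((fun i : Fin n => U (i : ℕ) ω), U n ω)) ⁻¹' C) := by
        intro ω hω
        by_cases h0 : K n ω = 0
        · exact Or.inl h0
        · refine Or.inr ?_
          simp only [Set.mem_preimage, hC, Set.mem_setOf_eq]
          have hKn : κ (fun i : Fin n => U (i : ℕ) ω) = K n ω := (hKV n n le_rfl ω).symm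
          rw [hKn]
          have heq : a • K n ω + ((1 - a) * ‖K n ω‖) • U n ω = 0 := by
            rw [← hKrec n ω]; exact hω
          have hc : (1 - a) * ‖K n ω‖ ≠ 0 := mul_ne_zero h1a (norm_ne_zero_iff.2 h0)
          have h2 : ((1 - a) * ‖K n ω‖) • U n ω = (-a) • K n ω := by
            rw [neg_smul]
            linear_combination (norm := module) heq
          calc U n ω = (((1 - a) * ‖K n ω‖)⁻¹ * ((1 - a) * ‖K n ω‖)) • U n ω := by
                rw [inv_mul_cancel₀ hc, one_smul]
            _ = ((1 - a) * ‖K n ω‖)⁻¹ • (((1 - a) * ‖K n ω‖) • U n ω) := by rw [mul_smul]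
            _ = ((1 - a) * ‖K n ω‖)⁻¹ • ((-a) • K n ω) := by rw [h2]
            _ = hfun (K n ω) := by rw [hhfun]; simp [mul_smul]
      have hme : MeasurableSet {ω | K n ω = 0} := by
        have : {ω | K n ω = 0} = K n ⁻¹' {0} := rfl
        rw [this]; exact hKmeas n (measurableSet_singleton 0)
      refine le_antisymm ?_ (zero_le)
      calc P {ω | K (n + 1) ω = 0}
          ≤ P ({ω | K n ω = 0} ∪
            ((fun ω => ((fun i : Fin n => U (i : ℕ) ω), U n ω)) ⁻¹' C)) := measure_mono hsub
        _ ≤ P {ω | K n ω = 0} +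
            P ((fun ω => ((fun i : Fin n => U (i : ℕ) ω), U n ω)) ⁻¹' C) := measure_union_le _ _
        _ = 0 := by
            rw [ih, zero_add, hPAIR n C hCm]
            have hzero : ∀ v : Fin n → E3, u {z | (v, z) ∈ C} = 0 := by
              intro v
              have : {z | (v, z) ∈ C} = {hfun (κ v)} := by
                ext z; simp [hC]
              rw [this]; exact hatoms _
            simp [hzero]
  -- the core conditional-law computation
  have hCORE : ∀ (n : ℕ) (B : Set (Fin n → E3)) (A : Set ℝ),
      MeasurableSet B → MeasurableSet A →
      P ((fun ω (i : Fin n) => U (i : ℕ) ω) ⁻¹' B ∩ D n ⁻¹' A) =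
        P ((fun ω (i : Fin n) => U (i : ℕ) ω) ⁻¹' B) * ν A := by
    intro n B A hB hA
    haveI : IsProbabilityMeasure (Measure.map (fun ω (i : Fin n) => U (i : ℕ) ω) P) :=
      Measure.isProbabilityMeasure_map (hVmeas n).aemeasurable
    set π := Measure.map (fun ω (i : Fin n) => U (i : ℕ) ω) P with hπ
    set κ : (Fin n → E3) → E3 := fun v => incKappa a k n (incExt n v) with hκ
    have hκm : Measurable κ := (incKappa_measurable a k n).comp (incExt_measurable n)
    set C : Set ((Fin n → E3) × E3) :=
      (B ×ˢ Set.univ) ∩ {p | incG a (κ p.1) p.2 ∈ A} with hC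
    have hCm : MeasurableSet C := by
      apply (hB.prod MeasurableSet.univ).inter
      have hX : Measurable fun p : (Fin n → E3) × E3 => κ p.1 := hκm.comp measurable_fst
      have hg : Measurable fun p : (Fin n → E3) × E3 => incG a (κ p.1) p.2 := by
        simp only [incG]
        exact (((measurable_const.fun_smul hX).fun_add
          ((measurable_const.fun_mul hX.norm).fun_smul measurable_snd)).norm.log).fun_sub hX.norm.log
      exact hg hA
    have hKn : ∀ ω, κ (fun i : Fin n => U (i : ℕ) ω) = K n ω := fun ω => (hKV n n le_rfl ω).symm
    have hset : (fun ω (i : Fin n) => U (i : ℕ) ω) ⁻¹' B ∩ D n ⁻¹' A =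
        (fun ω => ((fun i : Fin n => U (i : ℕ) ω), U n ω)) ⁻¹' C := by
      ext ω
      have hDval : incG a (κ (fun i : Fin n => U (i : ℕ) ω)) (U n ω) = D n ω := by
        rw [hKn ω, ← hDg n ω]
      simp only [Set.mem_inter_iff, Set.mem_preimage, hC, Set.mem_prod, Set.mem_univ,
        and_true, Set.mem_setOf_eq, hDval]
    rw [hset, hPAIR n C hCm]
    have hκzero : ∀ᵐ v ∂π, κ v ≠ 0 := by
      rw [ae_iff]
      have h1 : {v : Fin n → E3 | ¬κ v ≠ 0} = κ ⁻¹' {0} := by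
        ext v; simp
      rw [h1, hπ, Measure.map_apply (hVmeas n) (hκm (measurableSet_singleton 0))]
      have h2 : (fun ω (i : Fin n) => U (i : ℕ) ω) ⁻¹' (κ ⁻¹' {0}) = {ω | K n ω = 0} := by
        ext ω; simp [Set.mem_preimage, hKn ω]
      rw [h2]; exact hKzero n
    have hint : ∫⁻ v, u {z | (v, z) ∈ C} ∂π =
        ∫⁻ v, Set.indicator B (fun _ => ν A) v ∂π := by
      apply lintegral_congr_ae
      filter_upwards [hκzero] with v hv
      by_cases hvB : v ∈ B
      · have : {z | (v, z) ∈ C} = incG a (κ v) ⁻¹' A := by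
          ext z; simp [hC, hvB]
        rw [this, Set.indicator_of_mem hvB,
          ← Measure.map_apply (incG_measurable_right a (κ v)) hA,
          incG_law a ⟨ha0, ha1⟩ u hu hatoms (κ v) hv e₀ he₀n]
      · have : {z | (v, z) ∈ C} = ∅ := by
          ext z; simp [hC, hvB]
        rw [this, Set.indicator_of_notMem hvB, measure_empty]
    rw [hint, lintegral_indicator_const hB, hπ, Measure.map_apply (hVmeas n) hB, mul_comm]
  -- the marginal law of each increment
  have hmarg : ∀ (n : ℕ) (A : Set ℝ), MeasurableSet A → P (D n ⁻¹' A) = ν A := by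
    intro n A hA
    have h := hCORE n Set.univ A MeasurableSet.univ hA
    simpa [Set.preimage_univ, Set.univ_inter, measure_univ, one_mul] using h
  -- the finite-dimensional independence computation
  have hkey : ∀ (n : ℕ) (S : Finset ℕ), S ⊆ Finset.range n → ∀ (sets : ℕ → Set ℝ),
      (∀ i ∈ S, MeasurableSet (sets i)) →
      P (⋂ i ∈ S, D i ⁻¹' sets i) = ∏ i ∈ S, P (D i ⁻¹' sets i) := by
    intro n
    induction n with
    | zero =>
      intro S hS sets _
      have : S = ∅ := Finset.subset_empty.mp (by simpa using hS)
      subst this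
      simp
    | succ n ih =>
      intro S hS sets hsets
      by_cases hn : n ∈ S
      · set S' := S.erase n with hS'def
        have hS' : S' ⊆ Finset.range n := by
          intro i hi
          have hi1 : i ∈ S := Finset.mem_of_mem_erase hi
          have hi2 : i ≠ n := Finset.ne_of_mem_erase hi
          have := Finset.mem_range.mp (hS hi1)
          exact Finset.mem_range.mpr (lt_of_le_of_ne (Nat.lt_succ_iff.mp this) hi2)
        have hins : S = insert n S' := (Finset.insert_erase hn).symm
        -- express the intersection over S'
        set B : Set (Fin n → E3) :=
          ⋂ i ∈ S', (fun v => incG a (incKappa a k i (incExt n v)) (incExt n v i)) ⁻¹' sets i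
          with hBdef
        have hdm : ∀ i : ℕ, Measurable
            (fun v : Fin n → E3 => incG a (incKappa a k i (incExt n v)) (incExt n v i)) := by
          intro i
          have hX : Measurable fun v : Fin n → E3 => incKappa a k i (incExt n v) :=
            (incKappa_measurable a k i).comp (incExt_measurable n)
          have hY : Measurable fun v : Fin n → E3 => incExt n v i :=
            (measurable_pi_apply i).comp (incExt_measurable n)
          simp only [incG]
          exact (((measurable_const.fun_smul hX).fun_add
            ((measurable_const.fun_mul hX.norm).fun_smul hY)).norm.log).fun_sub hX.norm.log
        have hBm : MeasurableSet B := by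
          apply MeasurableSet.biInter (Finset.countable_toSet S')
          intro i hi
          exact hdm i (hsets i (Finset.mem_of_mem_erase hi))
        have hE' : (⋂ i ∈ S', D i ⁻¹' sets i) =
            (fun ω (i : Fin n) => U (i : ℕ) ω) ⁻¹' B := by
          rw [hBdef, Set.preimage_iInter₂]
          apply Set.iInter₂_congr
          intro i hi
          have hin : i < n := Finset.mem_range.mp (hS' hi)
          ext ω
          simp only [Set.mem_preimage]
          have hext : incExt n (fun j : Fin n => U (j : ℕ) ω) i = U i ω := by
            simp [incExt, hin]
          have : incG a (incKappa a k i (incExt n (fun j : Fin n => U (j : ℕ) ω)))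
              (incExt n (fun j : Fin n => U (j : ℕ) ω) i) = D i ω := by
            rw [hext, ← hKV n i (le_of_lt hin) ω, ← hDg i ω]
          rw [this]
        rw [hins, Finset.set_biInter_insert, Finset.prod_insert (Finset.notMem_erase n S),
          Set.inter_comm]
        rw [hE', hCORE n B (sets n) hBm (hsets n hn), ← hE',
          ih S' hS' sets (fun i hi => hsets i (Finset.mem_of_mem_erase hi)),
          hmarg n (sets n) (hsets n hn)]
        ring
      · have hS2 : S ⊆ Finset.range n := by
          intro i hi
          have := Finset.mem_range.mp (hS hi)
          exact Finset.mem_range.mpr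
            (lt_of_le_of_ne (Nat.lt_succ_iff.mp this) (fun h => hn (h ▸ hi)))
        exact ih S hS2 sets hsets
  constructor
  · rw [iIndepFun_iff_measure_inter_preimage_eq_mul]
    intro S sets hsets
    exact hkey (S.sup id + 1) S
      (fun i hi => Finset.mem_range.mpr (Nat.lt_succ_of_le (Finset.le_sup (f := id) hi)))
      sets hsets
  · intro n y hy
    have hνy : ν = Measure.map (fun z => Real.log ‖a • y + (1 - a) • z‖) u := by
      rw [hν]
      exact map_rot a u hu e₀ y he₀n hy
    have hm : Measurable fun z : E3 => Real.log ‖a • y + (1 - a) • z‖ := by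
      have h1 : Measurable fun z : E3 => a • y + (1 - a) • z :=
        measurable_const.add (measurable_id.const_smul (1 - a))
      exact h1.norm.log
    ext A hA
    rw [Measure.map_apply (hDmeas n) hA, hmarg n A hA, hνy, Measure.map_apply hm hA]
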